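/- Let d ≥ 4 be an odd integer and let t ≥ 2 be an integer. Then there exists no family X = {V_1, …, V_N} of N ≥ 2 pairwise distinct 2-dimensional linear subspaces of ℝ^d that is equi-isoclinic and an equal-weight tight t-fusion frame (i.e. no EITFF_t exists on G_{2,d} for d odd). -/

import Mathlib

open scoped BigOperators RealInnerProductSpace

/-- Orthogonal projection onto a subspace `V` of `ℝ^d`, as a linear endomorphism. -/
noncomputable def proj {d : ℕ} (V : Submodule ℝ (EuclideanSpace ℝ (Fin d))) :
    EuclideanSpace ℝ (Fin d) →ₗ[ℝ] EuclideanSpace ℝ (Fin d) :=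
  V.subtype ∘ₗ (V.orthogonalProjection).toLinearMap

/-- `tr(P_V P_W)`. -/
noncomputable def trP {d : ℕ} (V W : Submodule ℝ (EuclideanSpace ℝ (Fin d))) : ℝ :=
  LinearMap.trace ℝ (EuclideanSpace ℝ (Fin d)) (proj V ∘ₗ proj W)

/-- `tr((P_V P_W)²)`. -/
noncomputable def trP2 {d : ℕ} (V W : Submodule ℝ (EuclideanSpace ℝ (Fin d))) : ℝ :=
  LinearMap.trace ℝ (EuclideanSpace ℝ (Fin d)) ((proj V ∘ₗ proj W) ∘ₗ (proj V ∘ₗ proj W))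

namespace EITFFAux

open Polynomial

/- ### Polynomial coefficient lemmas -/

lemma coeff_mul_one' {R} [CommSemiring R] (p q : R[X]) :
    (p * q).coeff 1 = p.coeff 0 * q.coeff 1 + p.coeff 1 * q.coeff 0 := by
  rw [coeff_mul, show Finset.HasAntidiagonal.antidiagonal 1 = {(0,1),(1,0)} from by decide]
  simp

lemma coeff_mul_two' {R} [CommSemiring R] (p q : R[X]) :
    (p * q).coeff 2 = p.coeff 0 * q.coeff 2 + p.coeff 1 * q.coeff 1 + p.coeff 2 * q.coeff 0 := by
  rw [coeff_mul, show Finset.HasAntidiagonal.antidiagonal 2 = {(0,2),(1,1),(2,0)} from by decide]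
  rw [Finset.sum_insert (by decide), Finset.sum_insert (by decide), Finset.sum_singleton]
  ring

private lemma pow_pred_mul (p : ℝ) (t : ℕ) : (t:ℝ) * p^(t-1) * p = t * p^t := by
  cases t with
  | zero => simp
  | succ n => rw [Nat.add_sub_cancel, mul_assoc, ← pow_succ]

private lemma choose_pow_pred_mul (p : ℝ) (t : ℕ) :
    (t.choose 2 : ℝ) * p^(t-2) * p = (t.choose 2 : ℝ) * p^(t-1) := by
  match t with
  | 0 => simp
  | 1 => simp
  | (n+2) => rw [show n+2-2 = n from rfl, show n+2-1 = n+1 from rfl, mul_assoc, ← pow_succ]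

lemma coeff_quad_pow (p a b : ℝ) (t : ℕ) :
    ((C p + C a * X + C b * X^2)^t).coeff 0 = p^t ∧
    ((C p + C a * X + C b * X^2)^t).coeff 1 = t * p^(t-1) * a ∧
    ((C p + C a * X + C b * X^2)^t).coeff 2
      = t * p^(t-1) * b + (t.choose 2 : ℝ) * p^(t-2) * a^2 := by
  induction t with
  | zero => refine ⟨by simp, by simp [Polynomial.coeff_one], by simp [Polynomial.coeff_one]⟩
  | succ n ih =>
    obtain ⟨h0, h1, h2⟩ := ih
    have e0 : (C p + C a * X + C b * X^2).coeff 0 = p := by simp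
    have e1 : (C p + C a * X + C b * X^2).coeff 1 = a := by simp
    have e2 : (C p + C a * X + C b * X^2).coeff 2 = b := by
      simp [coeff_one, coeff_X]
    rw [pow_succ]
    refine ⟨?_, ?_, ?_⟩
    · rw [mul_coeff_zero, h0, e0, ← pow_succ]
    · rw [coeff_mul_one', h0, h1, e0, e1, Nat.add_sub_cancel]
      have k1 := pow_pred_mul p n
      push_cast at k1 ⊢
      linear_combination a * k1
    · rw [coeff_mul_two', h0, h1, h2, e0, e1, e2, Nat.add_sub_cancel,
        show n+1-2 = n-1 from rfl]
      have k1 := pow_pred_mul p n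
      have k2 := choose_pow_pred_mul p n
      have hch : ((n+1).choose 2 : ℝ) = (n.choose 1 : ℝ) + (n.choose 2 : ℝ) := by
        rw [← Nat.cast_add, ← Nat.choose_succ_succ]
      rw [hch, Nat.choose_one_right]
      push_cast at k1 k2 ⊢
      linear_combination b * k1 + a^2 * k2

/- ### Basic facts about `proj` -/

section Basic
variable {d : ℕ}
local notation "E" => EuclideanSpace ℝ (Fin d)

lemma proj_symm (V : Submodule ℝ E) (x w : E) : ⟪proj V x, w⟫ = ⟪x, proj V w⟫ :=
  Submodule.inner_starProjection_left_eq_right V x w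

lemma proj_self (V : Submodule ℝ E) {x : E} (h : x ∈ V) : proj V x = x := by
  have := Submodule.orthogonalProjectionOnto_mem_subspace_eq_self (K := V) ⟨x, h⟩
  simp only [proj, LinearMap.comp_apply, ContinuousLinearMap.coe_coe]
  rw [show ((⟨x, h⟩ : V) : E) = x from rfl] at this
  rw [this]
  rfl

lemma proj_mem (V : Submodule ℝ E) (x : E) : proj V x ∈ V := (V.orthogonalProjection x).2

lemma proj_idem (V : Submodule ℝ E) (x : E) : proj V (proj V x) = proj V x :=
  proj_self V (proj_mem V x)

lemma inner_proj_self (V : Submodule ℝ E) (x : E) : ⟪proj V x, x⟫ = ‖proj V x‖^2 := by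
  rw [← real_inner_self_eq_norm_sq, real_inner_comm, proj_symm, proj_idem, real_inner_comm]

lemma proj_eq_sum (V : Submodule ℝ E) (b : OrthonormalBasis (Fin 2) ℝ V) (x : E) :
    proj V x = ⟪(b 0 : E), x⟫ • (b 0 : E) + ⟪(b 1 : E), x⟫ • (b 1 : E) := by
  have h := b.orthogonalProjectionOnto_apply_eq_sum (U := V) x
  have h2 : proj V x = ((V.orthogonalProjection x : V) : E) := rfl
  rw [h2, h]
  push_cast
  simp [Fin.sum_univ_two]

lemma inner_coords (x y : E) : ⟪x, y⟫ = ∑ k, x k * y k := by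
  simp [PiLp.inner_apply, RCLike.inner_apply, mul_comm]

lemma coord_eq (x : E) (k : Fin d) : ⟪x, EuclideanSpace.single k (1:ℝ)⟫ = x k := by
  simp [EuclideanSpace.inner_single_right]

lemma trace_eq (g : E →ₗ[ℝ] E) :
    LinearMap.trace ℝ E g = ∑ k, g (EuclideanSpace.single k (1:ℝ)) k := by
  classical
  rw [LinearMap.trace_eq_matrix_trace ℝ (EuclideanSpace.basisFun (Fin d) ℝ).toBasis g]
  rw [Matrix.trace]
  apply Finset.sum_congr rfl
  intro k _
  rw [Matrix.diag_apply, LinearMap.toMatrix_apply]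
  simp [EuclideanSpace.basisFun_apply]

lemma sum_coord_mul (x y : E) : ∑ k, ⟪x, EuclideanSpace.single k (1:ℝ)⟫ * ⟪y, EuclideanSpace.single k (1:ℝ)⟫ = ⟪x, y⟫ := by
  rw [inner_coords]
  exact Finset.sum_congr rfl fun k _ => by rw [coord_eq, coord_eq]

lemma sum_coord_sq (x : E) : ∑ k, ⟪x, EuclideanSpace.single k (1:ℝ)⟫^2 = ‖x‖^2 := by
  rw [← real_inner_self_eq_norm_sq, ← sum_coord_mul]
  exact Finset.sum_congr rfl fun k _ => pow_two _

lemma trace_comp_proj (V : Submodule ℝ E) (b : OrthonormalBasis (Fin 2) ℝ V) (f : E →ₗ[ℝ] E) :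
    LinearMap.trace ℝ E (f ∘ₗ proj V)
      = ⟪(b 0 : E), f (b 0)⟫ + ⟪(b 1 : E), f (b 1)⟫ := by
  rw [trace_eq]
  have key : ∀ k : Fin d, (f ∘ₗ proj V) (EuclideanSpace.single k (1:ℝ)) k
      = ⟪(b 0 : E), EuclideanSpace.single k (1:ℝ)⟫ * ⟪f (b 0), EuclideanSpace.single k (1:ℝ)⟫
      + ⟪(b 1 : E), EuclideanSpace.single k (1:ℝ)⟫ * ⟪f (b 1), EuclideanSpace.single k (1:ℝ)⟫ := by
    intro k
    rw [LinearMap.comp_apply, proj_eq_sum V b, map_add, map_smul, map_smul]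
    simp only [coord_eq]
    simp [PiLp.add_apply, PiLp.smul_apply]
  rw [Finset.sum_congr rfl fun k _ => key k, Finset.sum_add_distrib,
    sum_coord_mul, sum_coord_mul]

lemma sum_coord_proj (V : Submodule ℝ E) (b : OrthonormalBasis (Fin 2) ℝ V) :
    ∑ k, ⟪proj V (EuclideanSpace.single k (1:ℝ)), EuclideanSpace.single k (1:ℝ)⟫ = 2 := by
  have h := trace_comp_proj V b LinearMap.id
  rw [trace_eq] at h
  have h2 : ∀ k : Fin d, (LinearMap.id ∘ₗ proj V) (EuclideanSpace.single k (1:ℝ)) k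
      = ⟪proj V (EuclideanSpace.single k (1:ℝ)), EuclideanSpace.single k (1:ℝ)⟫ := by
    intro k; rw [coord_eq]; rfl
  rw [Finset.sum_congr rfl fun k _ => h2 k] at h
  rw [h]
  simp only [LinearMap.id_apply]
  rw [real_inner_self_eq_norm_sq, real_inner_self_eq_norm_sq]
  have n0 : ‖(b 0 : E)‖ = 1 := b.orthonormal.1 0
  have n1 : ‖(b 1 : E)‖ = 1 := b.orthonormal.1 1
  rw [n0, n1]; norm_num

lemma pp_expand (V : Submodule ℝ E) (x v : E) (s : ℝ) :
    ⟪proj V (x + s • v), x + s • v⟫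
      = ⟪proj V x, x⟫ + (2*⟪proj V x, v⟫) * s + ⟪proj V v, v⟫ * s^2 := by
  have hsym : ⟪proj V v, x⟫ = ⟪proj V x, v⟫ := by
    rw [real_inner_comm, ← proj_symm]
  rw [map_add, map_smul]
  simp only [inner_add_left, inner_add_right, real_inner_smul_left, real_inner_smul_right]
  rw [hsym]
  ring

lemma norm_expand (x v : E) (s : ℝ) :
    ‖x + s • v‖^2 = ‖x‖^2 + (2*⟪x,v⟫) * s + ‖v‖^2 * s^2 := by
  rw [norm_add_sq_real, real_inner_smul_right, norm_smul]
  rw [mul_pow, Real.norm_eq_abs, sq_abs]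
  ring

lemma extract {N : ℕ} (V : Fin N → Submodule ℝ E) (t : ℕ) (A : ℝ)
    (H : ∀ x : E, ∑ i, ⟪proj (V i) x, x⟫^t = A * (‖x‖^2)^t) (x v : E) :
    ((∑ i, (t:ℝ) * ⟪proj (V i) x, x⟫^(t-1) * (2*⟪proj (V i) x, v⟫))
        = A * ((t:ℝ) * (‖x‖^2)^(t-1) * (2*⟪x,v⟫))) ∧
    ((∑ i, ((t:ℝ) * ⟪proj (V i) x, x⟫^(t-1) * ⟪proj (V i) v, v⟫
        + (t.choose 2 : ℝ) * ⟪proj (V i) x, x⟫^(t-2) * (2*⟪proj (V i) x, v⟫)^2))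
      = A * ((t:ℝ) * (‖x‖^2)^(t-1) * ‖v‖^2
        + (t.choose 2 : ℝ) * (‖x‖^2)^(t-2) * (2*⟪x,v⟫)^2)) := by
  classical
  set F : Polynomial ℝ :=
      (∑ i, (C ⟪proj (V i) x, x⟫ + C (2*⟪proj (V i) x, v⟫) * X + C ⟪proj (V i) v, v⟫ * X^2)^t)
      - C A * (C (‖x‖^2) + C (2*⟪x,v⟫) * X + C (‖v‖^2) * X^2)^t with hFdef
  have hF : F = 0 := by
    apply Polynomial.funext
    intro s
    have h2 := H (x + s • v)
    simp only [pp_expand, norm_expand] at h2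
    rw [hFdef]
    simp only [eval_sub, eval_mul, eval_add, eval_pow, eval_C, eval_X, eval_finset_sum,
      eval_zero]
    rw [sub_eq_zero]
    exact h2
  constructor
  · have h1 : F.coeff 1 = 0 := by rw [hF]; simp
    rw [hFdef] at h1
    rw [coeff_sub, finset_sum_coeff, coeff_C_mul] at h1
    rw [(coeff_quad_pow (‖x‖^2) (2*⟪x,v⟫) (‖v‖^2) t).2.1] at h1
    rw [Finset.sum_congr rfl (fun i _ =>
      (coeff_quad_pow ⟪proj (V i) x, x⟫ (2*⟪proj (V i) x, v⟫) ⟪proj (V i) v, v⟫ t).2.1)] at h1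
    linarith
  · have h1 : F.coeff 2 = 0 := by rw [hF]; simp
    rw [hFdef] at h1
    rw [coeff_sub, finset_sum_coeff, coeff_C_mul] at h1
    rw [(coeff_quad_pow (‖x‖^2) (2*⟪x,v⟫) (‖v‖^2) t).2.2] at h1
    rw [Finset.sum_congr rfl (fun i _ =>
      (coeff_quad_pow ⟪proj (V i) x, x⟫ (2*⟪proj (V i) x, v⟫) ⟪proj (V i) v, v⟫ t).2.2)] at h1
    linarith

private lemma pow_sub2_mul (p : ℝ) {t : ℕ} (ht : 2 ≤ t) : p^(t-2) * p = p^(t-1) := by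
  rw [← pow_succ]
  congr 1
  omega

lemma descent {N : ℕ} (V : Fin N → Submodule ℝ E)
    (bas : ∀ i, OrthonormalBasis (Fin 2) ℝ (V i)) (t : ℕ) (ht : 2 ≤ t) (A : ℝ) (hA : 0 < A)
    (hd : 0 < d)
    (H : ∀ x : E, ∑ i, ⟪proj (V i) x, x⟫^t = A * (‖x‖^2)^t) :
    ∃ B : ℝ, 0 < B ∧ ∀ x : E, ∑ i, ⟪proj (V i) x, x⟫^(t-1) = B * (‖x‖^2)^(t-1) := by
  classical
  set ch : ℝ := (t.choose 2 : ℝ) with hch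
  have hden : (0:ℝ) < 2*t + 4*ch := by
    have : (0:ℝ) ≤ ch := Nat.cast_nonneg _
    have : (0:ℝ) < (t:ℝ) := by positivity
    nlinarith
  have hnum : (0:ℝ) < (t:ℝ)*d + 4*ch := by
    have h1 : (0:ℝ) ≤ ch := Nat.cast_nonneg _
    have h2 : (1:ℝ) ≤ (t:ℝ) := by exact_mod_cast le_trans (by norm_num) ht
    have h3 : (1:ℝ) ≤ (d:ℝ) := by exact_mod_cast hd
    nlinarith
  refine ⟨A * ((t:ℝ)*d + 4*ch) / (2*t + 4*ch), by positivity, ?_⟩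
  intro x
  -- sum the second extracted identity over the coordinate basis vectors
  have key : ∀ k : Fin d,
      (∑ i, ((t:ℝ) * ⟪proj (V i) x, x⟫^(t-1) * ⟪proj (V i) (EuclideanSpace.single k (1:ℝ)), EuclideanSpace.single k (1:ℝ)⟫
        + ch * ⟪proj (V i) x, x⟫^(t-2) * (2*⟪proj (V i) x, EuclideanSpace.single k (1:ℝ)⟫)^2))
      = A * ((t:ℝ) * (‖x‖^2)^(t-1) * ‖EuclideanSpace.single k (1:ℝ)‖^2
        + ch * (‖x‖^2)^(t-2) * (2*⟪x,EuclideanSpace.single k (1:ℝ)⟫)^2) :=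
    fun k => (extract V t A H x (EuclideanSpace.single k (1:ℝ))).2
  have hsummed := Finset.sum_congr rfl (fun k (_ : k ∈ Finset.univ) => key k)
  rw [Finset.sum_comm] at hsummed
  -- evaluate the inner sums
  have lhs_eval : ∀ i : Fin N,
      (∑ k : Fin d, ((t:ℝ) * ⟪proj (V i) x, x⟫^(t-1) * ⟪proj (V i) (EuclideanSpace.single k (1:ℝ)), EuclideanSpace.single k (1:ℝ)⟫
        + ch * ⟪proj (V i) x, x⟫^(t-2) * (2*⟪proj (V i) x, EuclideanSpace.single k (1:ℝ)⟫)^2))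
      = (2*t + 4*ch) * ⟪proj (V i) x, x⟫^(t-1) := by
    intro i
    rw [Finset.sum_add_distrib, ← Finset.mul_sum, sum_coord_proj (V i) (bas i)]
    have : ∀ k : Fin d, ch * ⟪proj (V i) x, x⟫^(t-2) * (2*⟪proj (V i) x, EuclideanSpace.single k (1:ℝ)⟫)^2
        = (4 * ch * ⟪proj (V i) x, x⟫^(t-2)) * ⟪proj (V i) x, EuclideanSpace.single k (1:ℝ)⟫^2 := by
      intro k; ring
    rw [Finset.sum_congr rfl (fun k _ => this k), ← Finset.mul_sum, sum_coord_sq]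
    rw [← inner_proj_self]
    have := pow_sub2_mul ⟪proj (V i) x, x⟫ ht
    nlinarith [this]
  rw [Finset.sum_congr rfl (fun i (_ : i ∈ Finset.univ) => lhs_eval i)] at hsummed
  rw [← Finset.mul_sum] at hsummed
  -- right-hand side
  have rhs_eval :
      (∑ k : Fin d, (A * ((t:ℝ) * (‖x‖^2)^(t-1) * ‖EuclideanSpace.single k (1:ℝ)‖^2
        + ch * (‖x‖^2)^(t-2) * (2*⟪x,EuclideanSpace.single k (1:ℝ)⟫)^2)))
      = A * (((t:ℝ)*d + 4*ch) * (‖x‖^2)^(t-1)) := by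
    have he : ∀ k : Fin d, ‖EuclideanSpace.single k (1:ℝ)‖^2 = (1:ℝ) := by
      intro k
      rw [EuclideanSpace.norm_single]
      norm_num
    have expand : ∀ k : Fin d, A * ((t:ℝ) * (‖x‖^2)^(t-1) * ‖EuclideanSpace.single k (1:ℝ)‖^2
        + ch * (‖x‖^2)^(t-2) * (2*⟪x,EuclideanSpace.single k (1:ℝ)⟫)^2)
        = A * (t:ℝ) * (‖x‖^2)^(t-1)
          + (A * ch * (‖x‖^2)^(t-2) * 4) * ⟪x,EuclideanSpace.single k (1:ℝ)⟫^2 := by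
      intro k; rw [he k]; ring
    rw [Finset.sum_congr rfl (fun k _ => expand k), Finset.sum_add_distrib,
      Finset.sum_const, ← Finset.mul_sum, sum_coord_sq]
    simp only [Finset.card_univ, Fintype.card_fin, nsmul_eq_mul]
    have := pow_sub2_mul (‖x‖^2) ht
    linear_combination 4*A*ch*this
  rw [rhs_eval] at hsummed
  have hfin : (∑ i, ⟪proj (V i) x, x⟫^(t-1))
      = (A * ((t:ℝ)*d + 4*ch) * (‖x‖^2)^(t-1)) / (2*t + 4*ch) := by
    rw [eq_div_iff hden.ne']
    linear_combination hsummed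
  rw [hfin]
  ring

lemma descend_to_two {N : ℕ} (V : Fin N → Submodule ℝ E)
    (bas : ∀ i, OrthonormalBasis (Fin 2) ℝ (V i)) (hd : 0 < d) :
    ∀ t : ℕ, 2 ≤ t → ∀ A : ℝ, 0 < A →
      (∀ x : E, ∑ i, ⟪proj (V i) x, x⟫^t = A * (‖x‖^2)^t) →
      ∃ B : ℝ, 0 < B ∧ ∀ x : E, ∑ i, ⟪proj (V i) x, x⟫^2 = B * (‖x‖^2)^2 := by
  intro t ht
  induction t, ht using Nat.le_induction with
  | base => intro A hA H; exact ⟨A, hA, H⟩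
  | succ n hn ih =>
    intro A hA H
    obtain ⟨B, hB, HB⟩ := descent V bas (n+1) (by omega) A hA hd H
    rw [show n+1-1 = n from rfl] at HB
    exact ih B hB HB

lemma iso_facts (Vi Vj : Submodule ℝ E) (b : OrthonormalBasis (Fin 2) ℝ Vj) (y : ℝ)
    (h1 : trP Vi Vj = 2*y) (h2 : trP2 Vi Vj = 2*y^2) :
    ⟪proj Vi (b 0), (b 0 : E)⟫ = y ∧ ⟪proj Vi (b 1), (b 1 : E)⟫ = y ∧
    ⟪proj Vi (b 0), (b 1 : E)⟫ = 0 := by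
  set m00 := ⟪proj Vi (b 0), (b 0 : E)⟫ with hm00
  set m11 := ⟪proj Vi (b 1), (b 1 : E)⟫ with hm11
  set m01 := ⟪proj Vi (b 0), (b 1 : E)⟫ with hm01
  set m10 := ⟪proj Vi (b 1), (b 0 : E)⟫ with hm10
  have hsymm : m01 = m10 := by
    rw [hm01, hm10, proj_symm, real_inner_comm]
  have e1 : m00 + m11 = 2*y := by
    have h := trace_comp_proj Vj b (proj Vi)
    rw [show LinearMap.trace ℝ E (proj Vi ∘ₗ proj Vj) = trP Vi Vj from rfl, h1] at h
    rw [hm00, hm11]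
    linarith [h, real_inner_comm (proj Vi (b 0)) ((b 0 : E)),
      real_inner_comm (proj Vi (b 1)) ((b 1 : E))]
  have e2 : m00^2 + m01^2 + m10^2 + m11^2 = 2*y^2 := by
    have key := trace_comp_proj Vj b (proj Vi ∘ₗ proj Vj ∘ₗ proj Vi)
    have hcomp : (proj Vi ∘ₗ proj Vj ∘ₗ proj Vi) ∘ₗ proj Vj
        = (proj Vi ∘ₗ proj Vj) ∘ₗ (proj Vi ∘ₗ proj Vj) := by
      apply LinearMap.ext; intro z; rfl
    rw [hcomp] at key
    rw [show LinearMap.trace ℝ E ((proj Vi ∘ₗ proj Vj) ∘ₗ (proj Vi ∘ₗ proj Vj))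
        = trP2 Vi Vj from rfl, h2] at key
    have expand : ∀ a : Fin 2, ⟪((b a) : E), (proj Vi ∘ₗ proj Vj ∘ₗ proj Vi) (b a)⟫
        = ⟪proj Vi (b a), (b 0 : E)⟫^2 + ⟪proj Vi (b a), (b 1 : E)⟫^2 := by
      intro a
      rw [LinearMap.comp_apply, LinearMap.comp_apply, ← proj_symm]
      rw [proj_eq_sum Vj b (proj Vi (b a))]
      rw [inner_add_right, real_inner_smul_right, real_inner_smul_right]
      rw [real_inner_comm (proj Vi (b a)) ((b 0 : E)), real_inner_comm (proj Vi (b a)) ((b 1 : E))]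
      ring
    rw [expand 0, expand 1] at key
    rw [hm00, hm01, hm10, hm11]
    linarith [key]
  have hz : (m00 - y)^2 + (m11 - y)^2 + 2*m01^2 = 0 := by
    linear_combination e2 - 2*y*e1 + (m01 + m10) * hsymm
  clear_value m00 m11 m01 m10
  have g1 : m00 - y = 0 := by nlinarith [sq_nonneg (m00 - y), sq_nonneg (m11 - y), sq_nonneg m01]
  have g2 : m11 - y = 0 := by nlinarith [sq_nonneg (m00 - y), sq_nonneg (m11 - y), sq_nonneg m01]
  have g3 : m01 = 0 := by nlinarith [sq_nonneg (m00 - y), sq_nonneg (m11 - y), sq_nonneg m01]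
  exact ⟨by linarith, by linarith, g3⟩

end Basic
end EITFFAux

set_option maxHeartbeats 2000000 in
open EITFFAux in
/-- Corollary: for odd `d ≥ 4` and `t ≥ 2`, there is no `EITFF_t` on
`G_{2,d}`: no family of `N ≥ 2` pairwise distinct 2-dimensional subspaces of `ℝ^d`
that is equi-isoclinic and an equal-weight tight `t`-fusion frame. -/
theorem stmt19 (d t : ℕ) (hd : 4 ≤ d) (hodd : Odd d) (ht : 2 ≤ t) :
    ¬ ∃ (N : ℕ) (V : Fin N → Submodule ℝ (EuclideanSpace ℝ (Fin d))),
      2 ≤ N ∧ Function.Injective V ∧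
      (∀ i, Module.finrank ℝ (V i) = 2) ∧
      (∃ y : ℝ, y ∈ Set.Icc (0 : ℝ) 1 ∧ ∀ i j, i ≠ j →
        trP (V i) (V j) = 2 * y ∧ trP2 (V i) (V j) = 2 * y ^ 2) ∧
      (∃ A : ℝ, 0 < A ∧ ∀ x : EuclideanSpace ℝ (Fin d),
        ∑ i, ‖proj (V i) x‖ ^ (2 * t) = A * ‖x‖ ^ (2 * t)) := by
  rintro ⟨N, V, hN, hinj, hrank, ⟨y, hy, hiso⟩, ⟨A, hA, hframe⟩⟩
  classical
  have hd0 : 0 < d := by omega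
  set E' := EuclideanSpace ℝ (Fin d) with hE'
  -- orthonormal bases of each V i
  have bas : ∀ i, OrthonormalBasis (Fin 2) ℝ (V i) := fun i =>
    (stdOrthonormalBasis ℝ (V i)).reindex (finCongr (by rw [hrank i]))
  -- step 1: frame condition in inner-product form, descend to t = 2
  have Ht : ∀ x : E', ∑ i, (inner ℝ (proj (V i) x) x : ℝ) ^ t = A * (‖x‖^2)^t := by
    intro x
    have h := hframe x
    rw [Finset.sum_congr rfl (fun i (_ : i ∈ Finset.univ) => by
      rw [pow_mul, ← inner_proj_self (V i) x] :
        ∀ i, i ∈ Finset.univ → ‖proj (V i) x‖ ^ (2*t) = (inner ℝ (proj (V i) x) x : ℝ) ^ t)] at h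
    rw [h, pow_mul]
  obtain ⟨B, hB, H2⟩ := descend_to_two V bas hd0 t ht A hA Ht
  -- isoclinic facts
  have FM : ∀ (l i : Fin N), i ≠ l →
      ((inner ℝ (proj (V i) (bas l 0)) ((bas l 0 : E')) : ℝ) = y ∧
       (inner ℝ (proj (V i) (bas l 1)) ((bas l 1 : E')) : ℝ) = y ∧
       (inner ℝ (proj (V i) (bas l 0)) ((bas l 1 : E')) : ℝ) = 0) :=
    fun l i hil => iso_facts (V i) (V l) (bas l) y (hiso i l hil).1 (hiso i l hil).2
  have FMa : ∀ (l : Fin N) (a : Fin 2) (i : Fin N), i ≠ l →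
      (inner ℝ (proj (V i) (bas l a)) ((bas l a : E')) : ℝ) = y := by
    intro l a i hil
    fin_cases a
    · exact (FM l i hil).1
    · exact (FM l i hil).2.1
  -- norms of basis vectors
  have hnorm : ∀ (l : Fin N) (a : Fin 2), ‖((bas l a : E'))‖ = 1 :=
    fun l a => (bas l).orthonormal.1 a
  have hmem : ∀ (l : Fin N) (a : Fin 2), ((bas l a : E')) ∈ V l :=
    fun l a => (bas l a).2
  -- spanning
  have hTop : (⨆ l, V l) = ⊤ := by
    rw [← Submodule.orthogonal_eq_bot_iff, Submodule.eq_bot_iff]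
    intro x hx
    have hzero : ∀ i : Fin N, (inner ℝ (proj (V i) x) x : ℝ) = 0 := by
      intro i
      have hm : proj (V i) x ∈ (⨆ l, V l) :=
        (le_iSup V i) (proj_mem (V i) x)
      exact (Submodule.mem_orthogonal _ x).mp hx _ hm
    have h := H2 x
    rw [Finset.sum_congr rfl (fun i (_ : i ∈ Finset.univ) => by
        rw [hzero i] : ∀ i, i ∈ Finset.univ →
          (inner ℝ (proj (V i) x) x : ℝ)^2 = (0:ℝ)^2)] at h
    simp only [Finset.sum_const, ne_eq] at h
    have hx4 : (‖x‖^2)^2 = 0 := by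
      have h0 : (0:ℝ) = B * (‖x‖^2)^2 := by simpa using h.symm
      nlinarith [hB, sq_nonneg (‖x‖^2)]
    have h2 : ‖x‖ = 0 :=
      pow_eq_zero_iff two_ne_zero |>.mp (pow_eq_zero_iff two_ne_zero |>.mp hx4)
    exact norm_eq_zero.mp h2
  -- tightness
  set lam : ℝ := B - 1 + y with hlam
  have hEigBasis : ∀ (l : Fin N) (a : Fin 2),
      y • (∑ i, proj (V i) ((bas l a : E'))) = lam • ((bas l a : E')) := by
    intro l a
    apply ext_inner_right ℝ
    intro v
    set x : E' := ((bas l a : E')) with hx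
    have key := (extract V 2 B H2 x v).1
    have hc : ∀ i : Fin N, ((2:ℕ):ℝ) * (inner ℝ (proj (V i) x) x : ℝ)^(2-1)
        * (2*(inner ℝ (proj (V i) x) v : ℝ))
        = 4 * ((inner ℝ (proj (V i) x) x : ℝ) * (inner ℝ (proj (V i) x) v : ℝ)) := by
      intro i
      rw [show (2-1 : ℕ) = 1 from rfl, pow_one]
      push_cast; ring
    rw [Finset.sum_congr rfl (fun i _ => hc i)] at key
    have hxn : ‖x‖ = 1 := hnorm l a
    rw [hxn] at key
    have key' : ∑ i, ((inner ℝ (proj (V i) x) x : ℝ) * (inner ℝ (proj (V i) x) v : ℝ))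
        = B * (inner ℝ x v : ℝ) := by
      rw [← Finset.mul_sum] at key
      linear_combination key / 4
    -- subtract y times the sum
    have hsplit : ∑ i, (((inner ℝ (proj (V i) x) x : ℝ) - y) * (inner ℝ (proj (V i) x) v : ℝ))
        = (1 - y) * (inner ℝ x v : ℝ) := by
      rw [Finset.sum_eq_single_of_mem l (Finset.mem_univ l)]
      · rw [proj_self (V l) (hmem l a), real_inner_self_eq_norm_sq, hxn, one_pow]
      · intro i _ hil
        rw [FMa l a i hil, sub_self, zero_mul]
    have hsum2 : ∑ i, (((inner ℝ (proj (V i) x) x : ℝ) - y) * (inner ℝ (proj (V i) x) v : ℝ))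
        = ∑ i, ((inner ℝ (proj (V i) x) x : ℝ) * (inner ℝ (proj (V i) x) v : ℝ))
          - y * ∑ i, (inner ℝ (proj (V i) x) v : ℝ) := by
      rw [Finset.mul_sum, ← Finset.sum_sub_distrib]
      exact Finset.sum_congr rfl fun i _ => by ring
    have hmain : y * ∑ i, (inner ℝ (proj (V i) x) v : ℝ) = lam * (inner ℝ x v : ℝ) := by
      rw [hlam]
      have := hsplit
      rw [hsum2, key'] at this
      linarith [this]
    rw [real_inner_smul_left, real_inner_smul_left, ← hmain]
    rw [sum_inner]
  -- the eigen-equation extends to all of E'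
  have hEig : ∀ v : E', y • (∑ i, proj (V i) v) = lam • v := by
    set g : E' →ₗ[ℝ] E' := y • (∑ i : Fin N, proj (V i)) - lam • LinearMap.id with hg
    have happ : ∀ v : E', g v = y • (∑ i, proj (V i) v) - lam • v := by
      intro v
      rw [hg]
      simp [LinearMap.sub_apply, LinearMap.smul_apply, LinearMap.sum_apply]
    have hker : ∀ (l : Fin N), V l ≤ LinearMap.ker g := by
      intro l v hv
      have hv2 : v = (inner ℝ ((bas l 0 : E')) v : ℝ) • ((bas l 0 : E'))
          + (inner ℝ ((bas l 1 : E')) v : ℝ) • ((bas l 1 : E')) := by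
        rw [← proj_eq_sum (V l) (bas l) v, proj_self (V l) hv]
      have h0 : ((bas l 0 : E')) ∈ LinearMap.ker g := by
        rw [LinearMap.mem_ker, happ, sub_eq_zero]
        exact hEigBasis l 0
      have h1 : ((bas l 1 : E')) ∈ LinearMap.ker g := by
        rw [LinearMap.mem_ker, happ, sub_eq_zero]
        exact hEigBasis l 1
      rw [hv2]
      exact Submodule.add_mem _ (Submodule.smul_mem _ _ h0) (Submodule.smul_mem _ _ h1)
    have htot : ∀ v : E', v ∈ LinearMap.ker g := by
      intro v
      have : (⨆ l, V l) ≤ LinearMap.ker g := iSup_le hker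
      rw [hTop] at this
      exact this Submodule.mem_top
    intro v
    have := htot v
    rw [LinearMap.mem_ker, happ, sub_eq_zero] at this
    exact this
  have hTight : ∀ v : E', y * ∑ i, (inner ℝ (proj (V i) v) v : ℝ) = lam * ‖v‖^2 := by
    intro v
    have h := congrArg (fun w : E' => (inner ℝ w v : ℝ)) (hEig v)
    rw [real_inner_smul_left, real_inner_smul_left, sum_inner, real_inner_self_eq_norm_sq] at h
    exact h
  -- index j and the equations
  set j : Fin N := ⟨0, by omega⟩ with hjdef
  have hEa : B = 1 + ((N:ℝ) - 1) * y^2 := by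
    have h := H2 ((bas j 0 : E'))
    rw [← Finset.sum_erase_add _ _ (Finset.mem_univ j)] at h
    have e : ∀ i ∈ Finset.univ.erase j,
        (inner ℝ (proj (V i) (bas j 0)) ((bas j 0 : E')) : ℝ)^2 = y^2 := by
      intro i hi
      rw [FMa j 0 i (Finset.ne_of_mem_erase hi)]
    rw [Finset.sum_congr rfl e, Finset.sum_const,
      Finset.card_erase_of_mem (Finset.mem_univ j), Finset.card_univ, Fintype.card_fin,
      nsmul_eq_mul, proj_self (V j) (hmem j 0), real_inner_self_eq_norm_sq, hnorm j 0,
      Nat.cast_sub (by omega : 1 ≤ N), Nat.cast_one] at h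
    linear_combination -h
  have hEc : y * (2 * (N:ℝ)) = lam * (d:ℝ) := by
    have hsum := Finset.sum_congr rfl (fun k (_ : k ∈ (Finset.univ : Finset (Fin d))) =>
      hTight (EuclideanSpace.single k (1:ℝ)))
    rw [← Finset.mul_sum, Finset.sum_comm] at hsum
    rw [Finset.sum_congr rfl (fun i (_ : i ∈ (Finset.univ : Finset (Fin N))) =>
      sum_coord_proj (V i) (bas i))] at hsum
    have hrhs : ∀ k : Fin d, lam * ‖EuclideanSpace.single k (1:ℝ)‖^2 = lam := by
      intro k; rw [EuclideanSpace.norm_single]; norm_num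
    rw [Finset.sum_congr rfl (fun k (_ : k ∈ (Finset.univ : Finset (Fin d))) => hrhs k)] at hsum
    rw [Finset.sum_const, Finset.sum_const, Finset.card_univ, Finset.card_univ,
      Fintype.card_fin, Fintype.card_fin, nsmul_eq_mul, nsmul_eq_mul] at hsum
    linear_combination hsum
  have hEd : 2*lam*((d:ℝ)-2) + 4*(((N:ℝ)-1)*(y - y^2)) = 2*B*((d:ℝ)-2) := by
    have perk : ∀ k : Fin d,
        2*(lam*‖(EuclideanSpace.single k (1:ℝ)) - proj (V j) (EuclideanSpace.single k (1:ℝ))‖^2)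
          + ∑ i, 4*(inner ℝ (proj (V i) (bas j 0)) ((EuclideanSpace.single k (1:ℝ)) - proj (V j) (EuclideanSpace.single k (1:ℝ))) : ℝ)^2
        = 2*B*‖(EuclideanSpace.single k (1:ℝ)) - proj (V j) (EuclideanSpace.single k (1:ℝ))‖^2 := by
      intro k
      set ek : E' := EuclideanSpace.single k (1:ℝ) with hek
      set vk : E' := ek - proj (V j) ek with hvk
      set x : E' := (bas j 0 : E') with hxdef
      have hxv : (inner ℝ x vk : ℝ) = 0 := by
        rw [hvk, inner_sub_right, ← proj_symm, proj_self (V j) (hmem j 0), sub_self]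
      have hbj : (inner ℝ (proj (V j) vk) vk : ℝ) = 0 := by
        have hz : proj (V j) vk = 0 := by
          rw [hvk, map_sub, proj_idem, sub_self]
        rw [hz, inner_zero_left]
      have key := (extract V 2 B H2 x vk).2
      have hc : ∀ i : Fin N, ((2:ℕ):ℝ) * (inner ℝ (proj (V i) x) x : ℝ)^(2-1) * (inner ℝ (proj (V i) vk) vk : ℝ)
            + ((Nat.choose 2 2 : ℕ):ℝ) * (inner ℝ (proj (V i) x) x : ℝ)^(2-2) * (2*(inner ℝ (proj (V i) x) vk : ℝ))^2
          = 2 * ((inner ℝ (proj (V i) x) x : ℝ) * (inner ℝ (proj (V i) vk) vk : ℝ))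
            + 4*(inner ℝ (proj (V i) x) vk : ℝ)^2 := by
        intro i
        rw [show (2-1:ℕ) = 1 from rfl, show (2-2:ℕ) = 0 from rfl, pow_one, pow_zero, Nat.choose_self]
        push_cast; ring
      rw [Finset.sum_congr rfl (fun i _ => hc i), hnorm j 0, hxv] at key
      rw [Finset.sum_add_distrib] at key
      have hzero : ∑ i, (((inner ℝ (proj (V i) x) x : ℝ) - y) * (inner ℝ (proj (V i) vk) vk : ℝ)) = 0 := by
        apply Finset.sum_eq_zero
        intro i _
        by_cases hij : i = j
        · rw [hij, hbj, mul_zero]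
        · rw [FMa j 0 i hij, sub_self, zero_mul]
      have hT := hTight vk
      have hfirst : ∑ i, 2 * ((inner ℝ (proj (V i) x) x : ℝ) * (inner ℝ (proj (V i) vk) vk : ℝ))
          = 2 * (lam * ‖vk‖^2) := by
        have e : ∀ i : Fin N, 2 * ((inner ℝ (proj (V i) x) x : ℝ) * (inner ℝ (proj (V i) vk) vk : ℝ))
            = (((inner ℝ (proj (V i) x) x : ℝ) - y) * (inner ℝ (proj (V i) vk) vk : ℝ)) * 2
              + (2*y) * (inner ℝ (proj (V i) vk) vk : ℝ) := by
          intro i; ring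
        rw [Finset.sum_congr rfl (fun i _ => e i), Finset.sum_add_distrib, ← Finset.sum_mul,
          hzero, zero_mul, zero_add, ← Finset.mul_sum]
        linear_combination 2 * hT
      rw [hfirst] at key
      linear_combination key
    have hsummed := Finset.sum_congr rfl (fun k (_ : k ∈ (Finset.univ : Finset (Fin d))) => perk k)
    rw [Finset.sum_add_distrib] at hsummed
    have hnk : ∑ k, ‖(EuclideanSpace.single k (1:ℝ)) - proj (V j) (EuclideanSpace.single k (1:ℝ))‖^2 = (d:ℝ) - 2 := by
      have e : ∀ k : Fin d, ‖EuclideanSpace.single k (1:ℝ) - proj (V j) (EuclideanSpace.single k (1:ℝ))‖^2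
          = 1 - (inner ℝ (proj (V j) (EuclideanSpace.single k (1:ℝ))) (EuclideanSpace.single k (1:ℝ)) : ℝ) := by
        intro k
        rw [norm_sub_sq_real,
          real_inner_comm (EuclideanSpace.single k (1:ℝ)) (proj (V j) (EuclideanSpace.single k (1:ℝ))),
          ← inner_proj_self (V j), EuclideanSpace.norm_single]
        norm_num
        linarith [inner_proj_self (V j) (EuclideanSpace.single k (1:ℝ)),
          real_inner_comm (EuclideanSpace.single k (1:ℝ)) (proj (V j) (EuclideanSpace.single k (1:ℝ)))]
      rw [Finset.sum_congr rfl (fun k _ => e k), Finset.sum_sub_distrib, Finset.sum_const,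
        sum_coord_proj (V j) (bas j), Finset.card_univ, Fintype.card_fin, nsmul_eq_mul, mul_one]
    have hKi : ∀ i : Fin N,
        ∑ k, 4*(inner ℝ (proj (V i) (bas j 0)) ((EuclideanSpace.single k (1:ℝ)) - proj (V j) (EuclideanSpace.single k (1:ℝ))) : ℝ)^2
          = 4 * ‖proj (V i) (bas j 0) - proj (V j) (proj (V i) (bas j 0))‖^2 := by
      intro i
      rw [← Finset.mul_sum]
      congr 1
      have e : ∀ k : Fin d, (inner ℝ (proj (V i) (bas j 0)) ((EuclideanSpace.single k (1:ℝ)) - proj (V j) (EuclideanSpace.single k (1:ℝ))) : ℝ)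
          = (inner ℝ (proj (V i) (bas j 0) - proj (V j) (proj (V i) (bas j 0))) (EuclideanSpace.single k (1:ℝ)) : ℝ) := by
        intro k
        rw [inner_sub_right, inner_sub_left, ← proj_symm]
      rw [Finset.sum_congr rfl (fun k _ => by rw [e k])]
      exact sum_coord_sq _
    have hval : ∀ i ∈ Finset.univ.erase j,
        (4:ℝ) * ‖proj (V i) (bas j 0) - proj (V j) (proj (V i) (bas j 0))‖^2 = 4*(y - y^2) := by
      intro i hi
      have hij : i ≠ j := Finset.ne_of_mem_erase hi
      have hPj : proj (V j) (proj (V i) (bas j 0)) = y • ((bas j 0 : E')) := by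
        rw [proj_eq_sum (V j) (bas j),
          real_inner_comm (proj (V i) (bas j 0)) ((bas j 0 : E')),
          real_inner_comm (proj (V i) (bas j 0)) ((bas j 1 : E')),
          (FM j i hij).1, (FM j i hij).2.2, zero_smul, add_zero]
      rw [hPj, norm_sub_sq_real, real_inner_smul_right, ← inner_proj_self (V i),
        (FM j i hij).1, norm_smul, hnorm j 0, Real.norm_eq_abs, mul_pow, sq_abs]
      ring
    have hvalj : (4:ℝ) * ‖proj (V j) (bas j 0) - proj (V j) (proj (V j) (bas j 0))‖^2 = 0 := by
      rw [proj_idem, sub_self, norm_zero]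
      norm_num
    rw [Finset.sum_comm] at hsummed
    rw [Finset.sum_congr rfl (fun i (_ : i ∈ (Finset.univ : Finset (Fin N))) => hKi i)] at hsummed
    rw [← Finset.sum_erase_add _ _ (Finset.mem_univ j), hvalj, add_zero,
      Finset.sum_congr rfl hval, Finset.sum_const,
      Finset.card_erase_of_mem (Finset.mem_univ j), Finset.card_univ, Fintype.card_fin,
      nsmul_eq_mul, Nat.cast_sub (by omega : 1 ≤ N), Nat.cast_one] at hsummed
    rw [← Finset.mul_sum, ← Finset.mul_sum, ← Finset.mul_sum, hnk] at hsummed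
    linear_combination hsummed
  -- endgame
  rcases eq_or_lt_of_le hy.2 with hy1 | hylt
  · -- y = 1 : two subspaces coincide
    set i1 : Fin N := ⟨1, by omega⟩ with hi1
    have hne : i1 ≠ j := by simp [hi1, hjdef, Fin.ext_iff]
    have key : ∀ a : Fin 2, ((bas j a : E')) ∈ V i1 := by
      intro a
      have h1 : (inner ℝ (proj (V i1) (bas j a)) ((bas j a : E')) : ℝ) = 1 := by
        rw [FMa j a i1 hne]; exact hy1
      have hpn : ‖proj (V i1) ((bas j a : E'))‖^2 = 1 := by
        rw [← inner_proj_self (V i1), h1]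
      have hz : ‖proj (V i1) ((bas j a : E')) - (bas j a : E')‖^2 = 0 := by
        rw [norm_sub_sq_real, hpn, h1, hnorm j a]; norm_num
      have h0 := pow_eq_zero_iff two_ne_zero |>.mp hz
      have heq : proj (V i1) ((bas j a : E')) = (bas j a : E') := by
        rwa [norm_eq_zero, sub_eq_zero] at h0
      rw [← heq]; exact proj_mem _ _
    have hle : V j ≤ V i1 := by
      intro v hv
      have hv2 : v = (inner ℝ ((bas j 0 : E')) v : ℝ) • ((bas j 0 : E'))
          + (inner ℝ ((bas j 1 : E')) v : ℝ) • ((bas j 1 : E')) := by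
        rw [← proj_eq_sum (V j) (bas j) v, proj_self (V j) hv]
      rw [hv2]
      exact Submodule.add_mem _ (Submodule.smul_mem _ _ (key 0)) (Submodule.smul_mem _ _ (key 1))
    have hVeq : V j = V i1 :=
      Submodule.eq_of_le_of_finrank_eq hle (by rw [hrank j, hrank i1])
    exact hne (hinj hVeq).symm
  · -- y < 1
    have h2ny : 2*((N:ℝ)-1)*y = (d:ℝ) - 2 := by
      have h1y : (1:ℝ) - y ≠ 0 := by linarith
      have hmul : ((d:ℝ)-2)*(1-y) = 2*((N:ℝ)-1)*y*(1-y) := by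
        linear_combination (-1/2)*hEd + ((d:ℝ)-2)*hlam
      have := mul_right_cancel₀ h1y hmul
      linarith [this]
    by_cases hy0 : y = 0
    · rw [hy0] at h2ny
      norm_num at h2ny
      have hde : (d:ℝ) = 2 := by linarith
      have : d = 2 := by exact_mod_cast hde
      omega
    · have hdN : (d:ℝ)^2 = 4*(N:ℝ) := by
        have e1 : lam = ((N:ℝ)-1)*y^2 + y := by rw [hlam, hEa]; ring
        have e2 : 2*lam = y*(d:ℝ) := by
          calc 2*lam = y*(2*((N:ℝ)-1)*y) + 2*y := by rw [e1]; ring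
          _ = y*((d:ℝ)-2) + 2*y := by rw [h2ny]
          _ = y*(d:ℝ) := by ring
        have e3 : y*(4*(N:ℝ)) = y*((d:ℝ)^2) := by
          linear_combination 2*hEc + (d:ℝ)*e2
        have := mul_left_cancel₀ hy0 e3
        linarith [this]
      have hd2 : d^2 = 4*N := by exact_mod_cast hdN
      obtain ⟨m, hm⟩ := hodd
      have hsq : 4*(m*m + m) + 1 = 4*N := by
        rw [← hd2, hm]; ring
      obtain ⟨K, hK⟩ : ∃ K, 4*K + 1 = 4*N := ⟨m*m+m, hsq⟩
      omega
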